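/- Let n, m ∈ ℕ, l_i ≤ u_i for all i ∈ [n], ∑_i l_i ≤ ∑_j U_j, and suppose the classic ILP assignment problem (maximize ⟨W_E, X⟩ over binary X with l_i ≤ ∑_j X_{i,j} ≤ u_i and ∑_i X_{i,j} ≤ U_j) is feasible. If max_j φ_j + 2 max_j U_j ≤ n, then there exist binary matrices Z, Y, X such that: ∑_i Z_{i,j} = U_j + φ_j for all j; Y ≤ Z with ∑_i Y_{i,j} = U_j and each column of Y minimizing reviewer j's effort among such columns; X satisfies the ILP constraints and X ≤ E − Z + Y (entrywise, E the all-ones matrix). -/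

import Mathlib

theorem stmt12 (n m : ℕ) (l u : Fin n → ℕ) (U phi : Fin m → ℕ)
    (WE WR : Fin n → Fin m → ℝ)
    (hlu : ∀ i, l i ≤ u i)
    (hLU : ∑ i, l i ≤ ∑ j, U j)
    (hfeas : ∃ X : Fin n → Fin m → ℝ, (∀ i j, X i j = 0 ∨ X i j = 1) ∧
      (∀ i, (l i : ℝ) ≤ ∑ j, X i j ∧ ∑ j, X i j ≤ (u i : ℝ)) ∧
      (∀ j, ∑ i, X i j ≤ (U j : ℝ)))
    (hcond : Finset.univ.sup phi + 2 * Finset.univ.sup U ≤ n) :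
    ∃ Z Y X : Fin n → Fin m → ℝ,
      (∀ i j, Z i j = 0 ∨ Z i j = 1) ∧
      (∀ i j, Y i j = 0 ∨ Y i j = 1) ∧
      (∀ i j, X i j = 0 ∨ X i j = 1) ∧
      (∀ j, ∑ i, Z i j = (U j : ℝ) + (phi j : ℝ)) ∧
      (∀ i j, Y i j ≤ Z i j) ∧
      (∀ j, ∑ i, Y i j = (U j : ℝ)) ∧
      (∀ j, ∀ y : Fin n → ℝ, (∀ i, y i = 0 ∨ y i = 1) → (∀ i, y i ≤ Z i j) →
        (∑ i, y i = (U j : ℝ)) →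
        ∑ i, WR i j * Y i j ≤ ∑ i, WR i j * y i) ∧
      (∀ i, (l i : ℝ) ≤ ∑ j, X i j ∧ ∑ j, X i j ≤ (u i : ℝ)) ∧
      (∀ j, ∑ i, X i j ≤ (U j : ℝ)) ∧
      (∀ i j, X i j ≤ 1 - Z i j + Y i j) := by
  classical
  obtain ⟨X, hXbin, hXrow, hXcol⟩ := hfeas
  set S : Fin m → Finset (Fin n) :=
    fun j => Finset.univ.filter (fun i => X i j = 1) with hS
  have hcardS : ∀ j, (S j).card ≤ U j := by
    intro j
    have h1 : ∑ i, X i j = ((S j).card : ℝ) := by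
      rw [hS]
      rw [Finset.card_filter]
      push_cast
      refine Finset.sum_congr rfl ?_
      intro i _
      rcases hXbin i j with h | h <;> simp [h]
    have h2 := hXcol j
    rw [h1] at h2
    exact_mod_cast h2
  have hbound : ∀ j, U j + phi j ≤ ((S j)ᶜ).card := by
    intro j
    have h1 : U j ≤ Finset.univ.sup U := Finset.le_sup (Finset.mem_univ j)
    have h2 : phi j ≤ Finset.univ.sup phi := Finset.le_sup (Finset.mem_univ j)
    have h3 : ((S j)ᶜ).card = n - (S j).card := by
      rw [Finset.card_compl]; simp
    have h4 := hcardS j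
    omega
  choose Zs hZsub hZcard using
    fun j => Finset.exists_subset_card_eq (s := (S j)ᶜ) (hbound j)
  have hpow : ∀ j, ((Zs j).powersetCard (U j)).Nonempty := by
    intro j
    rw [Finset.powersetCard_nonempty, hZcard j]; omega
  choose Ys hYmem hYmin using
    fun j => Finset.exists_min_image ((Zs j).powersetCard (U j))
      (fun t => ∑ i ∈ t, WR i j) (hpow j)
  have hYsub : ∀ j, Ys j ⊆ Zs j := fun j => (Finset.mem_powersetCard.mp (hYmem j)).1
  have hYcard : ∀ j, (Ys j).card = U j := fun j => (Finset.mem_powersetCard.mp (hYmem j)).2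
  refine ⟨fun i j => if i ∈ Zs j then 1 else 0, fun i j => if i ∈ Ys j then 1 else 0, X,
    ?_, ?_, hXbin, ?_, ?_, ?_, ?_, hXrow, hXcol, ?_⟩
  · intro i j; dsimp only; split <;> simp
  · intro i j; dsimp only; split <;> simp
  · intro j
    have : ∑ i, (if i ∈ Zs j then (1:ℝ) else 0) = ((Zs j).card : ℝ) := by
      rw [Finset.sum_ite_mem, Finset.univ_inter, Finset.sum_const]
      simp
    rw [this, hZcard j]; push_cast; ring
  · intro i j
    by_cases h : i ∈ Ys j
    · simp [h, hYsub j h]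
    · simp [h]; split <;> norm_num
  · intro j
    have : ∑ i, (if i ∈ Ys j then (1:ℝ) else 0) = ((Ys j).card : ℝ) := by
      rw [Finset.sum_ite_mem, Finset.univ_inter, Finset.sum_const]
      simp
    rw [this, hYcard j]
  · intro j y hybin hyle hysum
    set t : Finset (Fin n) := Finset.univ.filter (fun i => y i = 1) with ht
    have htsub : t ⊆ Zs j := by
      intro i hi
      rw [ht, Finset.mem_filter] at hi
      by_contra hc
      have := hyle i
      rw [hi.2] at this
      simp [hc] at this
      linarith
    have hysum' : ∑ i, y i = (t.card : ℝ) := by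
      rw [ht, Finset.card_filter]
      push_cast
      refine Finset.sum_congr rfl ?_
      intro i _
      rcases hybin i with h | h <;> simp [h]
    have htcard : t.card = U j := by
      have := hysum'.symm.trans hysum
      exact_mod_cast this
    have htmem : t ∈ (Zs j).powersetCard (U j) :=
      Finset.mem_powersetCard.mpr ⟨htsub, htcard⟩
    have hmin := hYmin j t htmem
    have e1 : ∑ i, WR i j * (if i ∈ Ys j then (1:ℝ) else 0) = ∑ i ∈ Ys j, WR i j := by
      simp only [mul_ite, mul_one, mul_zero]
      rw [Finset.sum_ite_mem, Finset.univ_inter]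
    have e2 : ∑ i, WR i j * y i = ∑ i ∈ t, WR i j := by
      rw [ht, Finset.sum_filter]
      refine Finset.sum_congr rfl ?_
      intro i _
      rcases hybin i with h | h <;> simp [h]
    rw [e1, e2]
    exact hmin
  · intro i j
    rcases hXbin i j with h | h
    · rw [h]
      have h1 : (if i ∈ Zs j then (1:ℝ) else 0) ≤ 1 := by split <;> norm_num
      have h2 : (0:ℝ) ≤ (if i ∈ Ys j then (1:ℝ) else 0) := by split <;> norm_num
      linarith
    · have hiS : i ∈ S j := by rw [hS]; simp [h]
      have hiZ : i ∉ Zs j := fun hc => (Finset.mem_compl.mp (hZsub j hc)) hiS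
      have hiY : i ∉ Ys j := fun hc => hiZ (hYsub j hc)
      rw [h]
      simp [hiZ, hiY]
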